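/- arXiv:0904.4143 — 3 statements merged into one kernel-verified Lean document; each statement's English description precedes it below -/
import Mathlib

section
/- Suppose τ ∧ τ' < ∞ holds P-almost surely, and let V': X→[0,1] be measurable with V' = 1 on O and V' = 0 on X∖K. If the process (ζ_n)_{n∈ℕ} associated with ψ := V' is an (F_n)-martingale under P, then V'(x) = P(τ < τ' and τ < ∞). -/
open MeasureTheory Set Filter

/-- First hitting time of the set `S` by the sequence `x`, valued in `ℕ∞` (`⊤` if never hit). -/
noncomputable def hitTime {X : Type*} (S : Set X) (x : ℕ → X) : ℕ∞ :=
  sInf ((fun t : ℕ => (t : ℕ∞)) '' {t : ℕ | x t ∈ S})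

/-- `σ = τ ∧ τ'`: the minimum of the hitting times of `O` and of `X ∖ K`. -/
noncomputable def stopMin {Ω X : Type*} (O K : Set X) (proc : ℕ → Ω → X) (ω : Ω) : ℕ∞ :=
  min (hitTime O fun t => proc t ω) (hitTime Kᶜ fun t => proc t ω)

/-- `(n ∧ σ)(ω)` as a natural number. -/
noncomputable def stopIdx {Ω X : Type*} (O K : Set X) (proc : ℕ → Ω → X) (n : ℕ) (ω : Ω) : ℕ :=
  (min (n : ℕ∞) (stopMin O K proc ω)).toNat

/-- The process `ζ` associated with `ψ`: `ζ 0 = ψ x` and, for `n ≥ 1`,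
`ζ_n = Σ_{t=0}^{(n−1)∧σ} 1_O(x_t) + 1_{K∖O}(x_{(n−1)∧σ}) ⬝ 1_K(x_{n∧σ}) ψ(x_{n∧σ})`. -/
noncomputable def zeta {Ω X : Type*} (O K : Set X) (proc : ℕ → Ω → X) (x : X)
    (ψ : X → ℝ) : ℕ → Ω → ℝ
  | 0 => fun _ => ψ x
  | n + 1 => fun ω =>
      (∑ t ∈ Finset.range (stopIdx O K proc n ω + 1), O.indicator (1 : X → ℝ) (proc t ω)) +
        (K \ O).indicator (1 : X → ℝ) (proc (stopIdx O K proc n ω) ω) *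
          K.indicator ψ (proc (stopIdx O K proc (n + 1) ω) ω)

section HitTime

variable {X : Type*} {S : Set X} {x : ℕ → X}

lemma hitTime_le {n : ℕ} (h : x n ∈ S) : hitTime S x ≤ (n : ℕ∞) :=
  sInf_le ⟨n, h, rfl⟩

lemma not_mem_of_lt_hitTime {n : ℕ} (h : (n : ℕ∞) < hitTime S x) : x n ∉ S :=
  fun hm => absurd (hitTime_le hm) (not_le.2 h)

lemma hitTime_spec (h : hitTime S x < ⊤) :
    ∃ n : ℕ, hitTime S x = (n : ℕ∞) ∧ x n ∈ S := by
  classical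
  have hne : {t : ℕ | x t ∈ S}.Nonempty := by
    by_contra hemp
    rw [Set.not_nonempty_iff_eq_empty] at hemp
    have : hitTime S x = ⊤ := by
      rw [hitTime, hemp]; simp
    rw [this] at h; exact lt_irrefl _ h
  obtain ⟨t, ht⟩ := hne
  have hex : ∃ t : ℕ, x t ∈ S := ⟨t, ht⟩
  refine ⟨Nat.find hex, ?_, Nat.find_spec hex⟩
  refine le_antisymm (hitTime_le (Nat.find_spec hex)) ?_
  refine le_sInf ?_
  rintro b ⟨m, hm, rfl⟩
  exact Nat.cast_le.mpr (Nat.find_min' hex hm)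

lemma lt_hitTime_of_forall {n : ℕ} (h : ∀ t ≤ n, x t ∉ S) :
    (n : ℕ∞) < hitTime S x := by
  by_contra hle
  push_neg at hle
  have hlt : hitTime S x < ⊤ := hle.trans_lt (by simp)
  obtain ⟨m, hm, hms⟩ := hitTime_spec hlt
  rw [hm] at hle
  exact h m (by exact_mod_cast hle) hms

end HitTime

section StopIdx

variable {Ω X : Type*} {O K : Set X} {proc : ℕ → Ω → X}

lemma lt_hitTimeO_of_lt_stopIdx {n : ℕ} {ω : Ω} {t : ℕ} (ht : t < stopIdx O K proc n ω) :
    (t : ℕ∞) < hitTime O (fun s => proc s ω) := by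
  have hne : min (n : ℕ∞) (stopMin O K proc ω) ≠ ⊤ := by
    intro htop
    have := min_le_left (n : ℕ∞) (stopMin O K proc ω)
    rw [htop] at this
    exact absurd (top_le_iff.1 this) (by simp)
  have h1 : (t : ℕ∞) < min (n : ℕ∞) (stopMin O K proc ω) := by
    rw [← ENat.coe_toNat hne]
    exact_mod_cast ht
  exact h1.trans_le ((min_le_right _ _).trans (min_le_left _ _))

lemma zeta_sum_eq (n : ℕ) (ω : Ω) :
    (∑ t ∈ Finset.range (stopIdx O K proc n ω + 1), O.indicator (1 : X → ℝ) (proc t ω))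
      = O.indicator (1 : X → ℝ) (proc (stopIdx O K proc n ω) ω) := by
  rw [Finset.sum_range_succ]
  have hz : ∀ t ∈ Finset.range (stopIdx O K proc n ω),
      O.indicator (1 : X → ℝ) (proc t ω) = 0 := by
    intro t ht
    exact Set.indicator_of_notMem
      (not_mem_of_lt_hitTime (lt_hitTimeO_of_lt_stopIdx (Finset.mem_range.1 ht))) _
  rw [Finset.sum_congr rfl hz]
  simp

lemma stopIdx_of_le {N n : ℕ} {ω : Ω} (hσ : stopMin O K proc ω = (N : ℕ∞)) (h : N ≤ n) :
    stopIdx O K proc n ω = N := by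
  rw [stopIdx, hσ]
  rw [min_eq_right (by exact_mod_cast h)]
  simp

end StopIdx

theorem stmt7 {Ω X : Type*} {m0 : MeasurableSpace Ω} [MeasurableSpace X]
    (P : Measure Ω) [IsProbabilityMeasure P] (ℱ : Filtration ℕ m0)
    (O K : Set X) (hmO : MeasurableSet O) (hmK : MeasurableSet K) (hOK : O ⊂ K)
    (proc : ℕ → Ω → X) (hadapt : ∀ n, Measurable[ℱ n] (proc n))
    (x : X) (hx0 : ∀ᵐ ω ∂P, proc 0 ω = x)
    (hτstop : ∀ n : ℕ,
      MeasurableSet[ℱ n] {ω | hitTime O (fun t => proc t ω) ≤ (n : ℕ∞)})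
    (hτ'stop : ∀ n : ℕ,
      MeasurableSet[ℱ n] {ω | hitTime Kᶜ (fun t => proc t ω) ≤ (n : ℕ∞)})
    (hfin : ∀ᵐ ω ∂P, stopMin O K proc ω < ⊤)
    (V' : X → ℝ) (hV'meas : Measurable V') (hV'0 : ∀ y, 0 ≤ V' y) (hV'1 : ∀ y, V' y ≤ 1)
    (hV'O : ∀ y ∈ O, V' y = 1) (hV'K : ∀ y ∉ K, V' y = 0)
    (hmart : Martingale (zeta O K proc x V') ℱ P) :
    V' x = (P {ω | hitTime O (fun t => proc t ω) < hitTime Kᶜ (fun t => proc t ω) ∧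
      hitTime O (fun t => proc t ω) < ⊤}).toReal := by
  set A : Set Ω := {ω | hitTime O (fun t => proc t ω) < hitTime Kᶜ (fun t => proc t ω) ∧
      hitTime O (fun t => proc t ω) < ⊤} with hAdef
  -- measurability of A
  have hA : MeasurableSet A := by
    have hAeq : A = ⋃ n : ℕ, ({ω | hitTime O (fun t => proc t ω) ≤ (n : ℕ∞)} ∩
        {ω | hitTime Kᶜ (fun t => proc t ω) ≤ (n : ℕ∞)}ᶜ) := by
      ext ω
      simp only [hAdef, Set.mem_setOf_eq, Set.mem_iUnion, Set.mem_inter_iff,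
        Set.mem_compl_iff]
      constructor
      · rintro ⟨hlt, hfin'⟩
        obtain ⟨N, hN, -⟩ := hitTime_spec hfin'
        exact ⟨N, hN.le, fun h => absurd hlt (not_lt.2 (hN ▸ h))⟩
      · rintro ⟨n, h1, h2⟩
        rw [not_le] at h2
        exact ⟨h1.trans_lt h2, h1.trans_lt (by simp)⟩
    rw [hAeq]
    exact MeasurableSet.iUnion fun n =>
      ((ℱ.le n _ (hτstop n)).inter ((ℱ.le n _ (hτ'stop n)).compl))
  -- constant expectation
  have h1 : ∀ n, ∫ ω, zeta O K proc x V' n ω ∂P = V' x := by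
    intro n
    have h0 := hmart.2 0 n (Nat.zero_le n)
    calc ∫ ω, zeta O K proc x V' n ω ∂P
        = ∫ ω, (P[zeta O K proc x V' n | ℱ 0]) ω ∂P := (integral_condExp (ℱ.le 0)).symm
      _ = ∫ ω, zeta O K proc x V' 0 ω ∂P := integral_congr_ae h0
      _ = V' x := by simp [zeta]
  -- uniform bound
  have hbound : ∀ n ω, ‖zeta O K proc x V' n ω‖ ≤ 2 := by
    intro n ω
    cases n with
    | zero =>
      simp only [zeta]
      rw [Real.norm_eq_abs, abs_of_nonneg (hV'0 x)]
      linarith [hV'1 x]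
    | succ m =>
      simp only [zeta]
      rw [zeta_sum_eq]
      have h01 : ∀ (s : Set X) (y : X),
          0 ≤ s.indicator (1 : X → ℝ) y ∧ s.indicator (1 : X → ℝ) y ≤ 1 := by
        intro s y; by_cases h : y ∈ s <;> simp [h]
      have hK01 : ∀ y : X, 0 ≤ K.indicator V' y ∧ K.indicator V' y ≤ 1 := by
        intro y; by_cases h : y ∈ K <;> simp [h, hV'0, hV'1]
      obtain ⟨a0, a1⟩ := h01 O (proc (stopIdx O K proc m ω) ω)
      obtain ⟨b0, b1⟩ := h01 (K \ O) (proc (stopIdx O K proc m ω) ω)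
      obtain ⟨c0, c1⟩ := hK01 (proc (stopIdx O K proc (m + 1) ω) ω)
      rw [Real.norm_eq_abs, abs_of_nonneg (by positivity)]
      nlinarith
  -- a.s. convergence
  have hlim : ∀ᵐ ω ∂P, Filter.Tendsto (fun n => zeta O K proc x V' n ω) Filter.atTop
      (nhds (A.indicator (1 : Ω → ℝ) ω)) := by
    filter_upwards [hfin] with ω hσ
    have hσN : stopMin O K proc ω = ((stopMin O K proc ω).toNat : ℕ∞) :=
      (ENat.coe_toNat hσ.ne).symm
    set N := (stopMin O K proc ω).toNat with hNdef
    apply tendsto_atTop_of_eventually_const (i₀ := N + 1)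
    intro n hn
    obtain ⟨m, rfl⟩ : ∃ m, n = m + 1 := ⟨n - 1, by omega⟩
    have hmN : N ≤ m := by omega
    have hs1 : stopIdx O K proc m ω = N := stopIdx_of_le hσN hmN
    have hs2 : stopIdx O K proc (m + 1) ω = N := stopIdx_of_le hσN (by omega)
    simp only [zeta]
    rw [zeta_sum_eq, hs1, hs2]
    rcases le_or_gt (hitTime O fun t => proc t ω) (hitTime Kᶜ fun t => proc t ω) with
      hcase | hcase
    · -- σ = τ = N, the process hits O at time N
      have hτN : hitTime O (fun t => proc t ω) = (N : ℕ∞) := by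
        rw [← hσN]; exact (min_eq_left hcase).symm
      have hτfin : hitTime O (fun t => proc t ω) < ⊤ := by rw [hτN]; simp
      obtain ⟨N', hN', hmem⟩ := hitTime_spec hτfin
      have hNN : N' = N := by
        have := hN'.symm.trans hτN; exact_mod_cast this
      rw [hNN] at hmem
      have hmemO : proc N ω ∈ O := hmem
      have hnotKO : proc N ω ∉ K \ O := fun h => h.2 hmemO
      have hAω : ω ∈ A := by
        refine ⟨?_, hτfin⟩
        rw [hτN]
        refine lt_hitTime_of_forall ?_
        intro t ht
        rcases lt_or_eq_of_le ht with ht' | ht'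
        · have h1 : (t : ℕ∞) < hitTime Kᶜ (fun s => proc s ω) := by
            refine lt_of_lt_of_le ?_ (hcase.trans (le_refl _))
            rw [hτN]; exact_mod_cast ht'
          exact fun h => (not_mem_of_lt_hitTime h1) h
        · subst ht'
          exact fun h => h (hOK.subset hmemO)
      rw [Set.indicator_of_mem hmemO, Set.indicator_of_notMem hnotKO,
        Set.indicator_of_mem hAω]
      simp
    · -- σ = τ' = N, the process exits K at time N
      have hτ'N : hitTime Kᶜ (fun t => proc t ω) = (N : ℕ∞) := by
        rw [← hσN]; exact (min_eq_right hcase.le).symm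
      have hτ'fin : hitTime Kᶜ (fun t => proc t ω) < ⊤ := by rw [hτ'N]; simp
      obtain ⟨N', hN', hmem⟩ := hitTime_spec hτ'fin
      have hNN : N' = N := by
        have := hN'.symm.trans hτ'N; exact_mod_cast this
      rw [hNN] at hmem
      have hmemKc : proc N ω ∉ K := hmem
      have hnotO : proc N ω ∉ O := fun h => hmemKc (hOK.subset h)
      have hnotKO : proc N ω ∉ K \ O := fun h => hmemKc h.1
      have hAω : ω ∉ A := by
        rintro ⟨hlt, -⟩
        exact absurd hlt (not_lt.2 hcase.le)
      rw [Set.indicator_of_notMem hnotO, Set.indicator_of_notMem hnotKO,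
        Set.indicator_of_notMem hAω]
      ring
  -- dominated convergence and conclusion
  have hdom := tendsto_integral_of_dominated_convergence (μ := P)
      (F := zeta O K proc x V') (f := A.indicator (1 : Ω → ℝ)) (fun _ => 2)
      (fun n => (hmart.integrable n).aestronglyMeasurable)
      (integrable_const 2)
      (fun n => Filter.Eventually.of_forall (hbound n))
      hlim
  have hconst : Filter.Tendsto (fun n => ∫ ω, zeta O K proc x V' n ω ∂P) Filter.atTop
      (nhds (V' x)) := by
    simp only [h1]; exact tendsto_const_nhds
  have hfinal := tendsto_nhds_unique hconst hdom
  rw [hfinal, integral_indicator_one hA, measureReal_def]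
end

section
/- Let ψ: X→[0,1] be measurable with ψ = 1 on O and ψ = 0 on X∖K, and suppose that for every n ∈ ℕ, P-almost surely on the event {σ > n}, E[1_K(x_{n+1}) ψ(x_{n+1}) | F_n] ≤ ψ(x_n). Set V := P(τ < τ' and τ < ∞) and Λ := lim_{n→∞} E[ζ_n], which exists since (E[ζ_n])_{n∈ℕ} is nonincreasing and nonnegative. Then: (a) Λ = V if and only if lim_{n→∞} E[1_{K∖O}(x_{(n−1)∧σ}) · 1_K(x_{n∧σ}) ψ(x_{n∧σ})] = 0; and (b) V = ψ(x) if and only if both ψ(x) = Λ (thriftiness) and Λ = V (equalization) hold. -/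
open MeasureTheory Set Filter

/-- The second-term process `M` associated with `ψ`: `M 0 = ψ x` and, for `n ≥ 1`,
`M_n = 1_{K∖O}(x_{(n−1)∧σ}) ⬝ 1_K(x_{n∧σ}) ψ(x_{n∧σ})`. -/
noncomputable def zetaM {Ω X : Type*} (O K : Set X) (proc : ℕ → Ω → X) (x : X)
    (ψ : X → ℝ) : ℕ → Ω → ℝ
  | 0 => fun _ => ψ x
  | n + 1 => fun ω =>
      (K \ O).indicator (1 : X → ℝ) (proc (stopIdx O K proc n ω) ω) *
        K.indicator ψ (proc (stopIdx O K proc (n + 1) ω) ω)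

namespace Stmt9Aux

variable {X : Type*} {S : Set X} {y : ℕ → X}

lemma hitTime_le_iff {n : ℕ} : hitTime S y ≤ (n : ℕ∞) ↔ ∃ t ≤ n, y t ∈ S := by
  constructor
  · intro h
    by_contra hc
    push_neg at hc
    have h2 : (n : ℕ∞) + 1 ≤ hitTime S y := by
      apply le_sInf
      rintro b ⟨t, ht, rfl⟩
      have hnt : n < t := lt_of_not_ge fun h' => hc t h' ht
      simpa using (Nat.cast_le.mpr (Nat.succ_le_of_lt hnt) : ((n+1 : ℕ) : ℕ∞) ≤ t)
    have := h.trans_lt (lt_of_lt_of_le (by simp [ENat.lt_add_one_iff]) h2)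
    exact lt_irrefl _ this
  · rintro ⟨t, ht, hy⟩
    exact le_trans (sInf_le ⟨t, hy, rfl⟩) (by simpa using (Nat.cast_le.mpr ht : ((t:ℕ):ℕ∞) ≤ n))

lemma lt_hitTime_iff {n : ℕ} : (n : ℕ∞) < hitTime S y ↔ ∀ t ≤ n, y t ∉ S := by
  rw [← not_le, hitTime_le_iff]; push_neg; rfl

lemma hitTime_mem {n : ℕ} (h : hitTime S y ≤ (n : ℕ∞)) : y (hitTime S y).toNat ∈ S := by
  classical
  obtain ⟨t, ht, hyt⟩ := hitTime_le_iff.mp h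
  have hne : ∃ s, y s ∈ S := ⟨t, hyt⟩
  have heq : hitTime S y = (Nat.find hne : ℕ∞) := by
    refine le_antisymm (sInf_le ⟨_, Nat.find_spec hne, rfl⟩) (le_sInf ?_)
    rintro b ⟨s, hs, rfl⟩
    simpa using (Nat.cast_le.mpr (Nat.find_min' hne hs) : ((Nat.find hne : ℕ) : ℕ∞) ≤ s)
  rw [heq, ENat.toNat_coe]
  exact Nat.find_spec hne

variable {Ω X : Type*} {O K : Set X} {proc : ℕ → Ω → X} {ω : Ω}

lemma stopIdx_of_lt {n : ℕ} (h : (n : ℕ∞) < stopMin O K proc ω) :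
    stopIdx O K proc n ω = n := by
  unfold stopIdx
  rw [min_eq_left h.le, ENat.toNat_coe]

lemma stopIdx_of_le {n : ℕ} (h : stopMin O K proc ω ≤ (n : ℕ∞)) :
    stopIdx O K proc n ω = (stopMin O K proc ω).toNat := by
  unfold stopIdx
  rw [min_eq_right h]

lemma zetaM_succ (x : X) (ψ : X → ℝ) (n : ℕ) (ω : Ω) :
    zetaM O K proc x ψ (n + 1) ω =
      ({ω' : Ω | (n : ℕ∞) < stopMin O K proc ω'}).indicator
        (fun ω' => K.indicator ψ (proc (n + 1) ω')) ω := by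
  by_cases h : (n : ℕ∞) < stopMin O K proc ω
  · rw [Set.indicator_of_mem (show ω ∈ {ω' : Ω | (n : ℕ∞) < stopMin O K proc ω'} from h)]
    have hidx : stopIdx O K proc n ω = n := stopIdx_of_lt h
    have hτ : (n : ℕ∞) < hitTime O (fun t => proc t ω) := lt_of_lt_of_le h (min_le_left _ _)
    have hτ' : (n : ℕ∞) < hitTime Kᶜ (fun t => proc t ω) := lt_of_lt_of_le h (min_le_right _ _)
    have hO : proc n ω ∉ O := lt_hitTime_iff.mp hτ n le_rfl
    have hK : proc n ω ∈ K := not_not.mp (lt_hitTime_iff.mp hτ' n le_rfl)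
    have hσ1 : ((n + 1 : ℕ) : ℕ∞) ≤ stopMin O K proc ω := by
      have := Order.add_one_le_of_lt h
      exact_mod_cast this
    have hidx2 : stopIdx O K proc (n + 1) ω = n + 1 := by
      unfold stopIdx
      rw [min_eq_left hσ1, ENat.toNat_coe]
    simp only [zetaM, hidx, hidx2]
    rw [Set.indicator_of_mem (show proc n ω ∈ K \ O from ⟨hK, hO⟩), Pi.one_apply, one_mul]
  · rw [Set.indicator_of_notMem (show ω ∉ {ω' : Ω | (n : ℕ∞) < stopMin O K proc ω'} from h)]
    push_neg at h
    have hidx : stopIdx O K proc n ω = (stopMin O K proc ω).toNat := stopIdx_of_le h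
    have hidx2 : stopIdx O K proc (n + 1) ω = (stopMin O K proc ω).toNat :=
      stopIdx_of_le (h.trans (by exact_mod_cast Nat.cast_le.mpr (Nat.le_succ n)))
    set s := (stopMin O K proc ω).toNat with hs
    have hcoe : (s : ℕ∞) = stopMin O K proc ω :=
      ENat.coe_toNat (fun htop => by rw [htop] at h; simp at h)
    simp only [zetaM, hidx, hidx2]
    rcases le_or_gt (hitTime O (fun t => proc t ω)) (hitTime Kᶜ (fun t => proc t ω)) with h1 | h1
    · have hσeq : stopMin O K proc ω = hitTime O (fun t => proc t ω) := min_eq_left h1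
      have hmem : proc s ω ∈ O := by
        have := hitTime_mem (S := O) (y := fun t => proc t ω) (n := n) (hσeq ▸ h)
        rwa [← hσeq, ← hs] at this
      rw [Set.indicator_of_notMem (fun hx => hx.2 hmem), zero_mul]
    · have hσeq : stopMin O K proc ω = hitTime Kᶜ (fun t => proc t ω) := min_eq_right h1.le
      have hmem : proc s ω ∈ Kᶜ := by
        have := hitTime_mem (S := Kᶜ) (y := fun t => proc t ω) (n := n) (hσeq ▸ h)
        rwa [← hσeq, ← hs] at this
      rw [Set.indicator_of_notMem hmem, mul_zero]


lemma sum_eq (hOK : O ⊆ K) (n : ℕ) (ω : Ω) :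
    (∑ t ∈ Finset.range (stopIdx O K proc n ω + 1), O.indicator (1 : X → ℝ) (proc t ω)) =
      ({ω' : Ω | hitTime O (fun t => proc t ω') ≤ (n : ℕ∞) ∧
        hitTime O (fun t => proc t ω') < hitTime Kᶜ (fun t => proc t ω')}).indicator 1 ω := by
  by_cases h : (n : ℕ∞) < stopMin O K proc ω
  · have hidx : stopIdx O K proc n ω = n := stopIdx_of_lt h
    have hτ : (n : ℕ∞) < hitTime O (fun t => proc t ω) := lt_of_lt_of_le h (min_le_left _ _)
    rw [Set.indicator_of_notMem (fun hmem => absurd hmem.1 (not_le.mpr hτ)), hidx]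
    apply Finset.sum_eq_zero
    intro t ht
    exact Set.indicator_of_notMem
      (lt_hitTime_iff.mp hτ t (Nat.lt_succ_iff.mp (Finset.mem_range.mp ht))) _
  · push_neg at h
    have hidx : stopIdx O K proc n ω = (stopMin O K proc ω).toNat := stopIdx_of_le h
    set s := (stopMin O K proc ω).toNat with hs
    have hcoe : (s : ℕ∞) = stopMin O K proc ω :=
      ENat.coe_toNat (fun htop => by rw [htop] at h; simp at h)
    have hsmall : ∀ t < s, proc t ω ∉ O := by
      intro t ht hO
      have h1 : hitTime O (fun t => proc t ω) ≤ (t : ℕ∞) :=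
        hitTime_le_iff.mpr ⟨t, le_rfl, hO⟩
      have h2 : (t : ℕ∞) < stopMin O K proc ω := by
        rw [← hcoe]; exact_mod_cast ht
      exact absurd (lt_of_le_of_lt (le_trans (min_le_left _ _) h1) h2) (lt_irrefl _)
    rw [hidx, Finset.sum_range_succ, Finset.sum_eq_zero
      (fun t ht => Set.indicator_of_notMem (hsmall t (Finset.mem_range.mp ht)) _), zero_add]
    rcases le_or_gt (hitTime O (fun t => proc t ω)) (hitTime Kᶜ (fun t => proc t ω)) with h1 | h1
    · have hσeq : stopMin O K proc ω = hitTime O (fun t => proc t ω) := min_eq_left h1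
      have hτn : hitTime O (fun t => proc t ω) ≤ (n : ℕ∞) := hσeq ▸ h
      have hmem : proc s ω ∈ O := by
        have := hitTime_mem (S := O) (y := fun t => proc t ω) hτn
        rwa [← hσeq, ← hs] at this
      have hlt : hitTime O (fun t => proc t ω) < hitTime Kᶜ (fun t => proc t ω) := by
        rcases lt_or_eq_of_le h1 with h2 | h2
        · exact h2
        · exfalso
          have hτ'n : hitTime Kᶜ (fun t => proc t ω) ≤ (n : ℕ∞) := h2 ▸ hτn
          have hmem' : proc (hitTime Kᶜ (fun t => proc t ω)).toNat ω ∈ Kᶜ :=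
            hitTime_mem hτ'n
          have : (hitTime Kᶜ (fun t => proc t ω)).toNat = s := by
            rw [hs, hσeq, h2]
          rw [this] at hmem'
          exact hmem' (hOK hmem)
      rw [Set.indicator_of_mem hmem,
        Set.indicator_of_mem (show ω ∈ {ω' : Ω | hitTime O (fun t => proc t ω') ≤ (n : ℕ∞) ∧
          hitTime O (fun t => proc t ω') < hitTime Kᶜ (fun t => proc t ω')} from ⟨hτn, hlt⟩)]
      simp
    · have hσeq : stopMin O K proc ω = hitTime Kᶜ (fun t => proc t ω) := min_eq_right h1.le
      have hmem : proc s ω ∈ Kᶜ := by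
        have := hitTime_mem (S := Kᶜ) (y := fun t => proc t ω) (hσeq ▸ h)
        rwa [← hσeq, ← hs] at this
      rw [Set.indicator_of_notMem (fun hO => hmem (hOK hO)),
        Set.indicator_of_notMem (show ω ∉ {ω' : Ω | hitTime O (fun t => proc t ω') ≤ (n : ℕ∞) ∧
          hitTime O (fun t => proc t ω') < hitTime Kᶜ (fun t => proc t ω')} from
          fun hx => absurd hx.2 (not_lt.mpr h1.le))]

lemma zeta_succ (hOK : O ⊆ K) (x : X) (ψ : X → ℝ) (n : ℕ) (ω : Ω) :
    zeta O K proc x ψ (n + 1) ω =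
      ({ω' : Ω | hitTime O (fun t => proc t ω') ≤ (n : ℕ∞) ∧
        hitTime O (fun t => proc t ω') < hitTime Kᶜ (fun t => proc t ω')}).indicator 1 ω +
      zetaM O K proc x ψ (n + 1) ω := by
  show _ + _ = _ + _
  rw [sum_eq hOK n ω]
  rfl


lemma Amono {m n : ℕ} (hn : m ≤ n) :
    {ω' : Ω | hitTime O (fun t => proc t ω') ≤ (m : ℕ∞) ∧
      hitTime O (fun t => proc t ω') < hitTime Kᶜ (fun t => proc t ω')} ⊆
    {ω' : Ω | hitTime O (fun t => proc t ω') ≤ (n : ℕ∞) ∧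
      hitTime O (fun t => proc t ω') < hitTime Kᶜ (fun t => proc t ω')} :=
  fun ω' hω' => ⟨hω'.1.trans (by exact_mod_cast hn), hω'.2⟩

lemma Aset_eq (n : ℕ) :
    {ω' : Ω | hitTime O (fun t => proc t ω') ≤ (n : ℕ∞) ∧
      hitTime O (fun t => proc t ω') < hitTime Kᶜ (fun t => proc t ω')} =
    ⋃ t ∈ Finset.range (n + 1),
      ({ω' : Ω | hitTime O (fun t => proc t ω') ≤ (t : ℕ∞)} ∩
        {ω' : Ω | hitTime Kᶜ (fun t => proc t ω') ≤ (t : ℕ∞)}ᶜ) := by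
  ext ω
  simp only [Set.mem_setOf_eq, Set.mem_iUnion, Set.mem_inter_iff, Set.mem_compl_iff,
    Finset.mem_range, Nat.lt_succ_iff]
  constructor
  · rintro ⟨h1, h2⟩
    have hne : hitTime O (fun t => proc t ω) ≠ ⊤ := fun htop => by simp [htop] at h1
    have ht : ((hitTime O (fun t => proc t ω)).toNat : ℕ∞) = hitTime O (fun t => proc t ω) :=
      ENat.coe_toNat hne
    refine ⟨(hitTime O (fun t => proc t ω)).toNat, ?_, le_of_eq ht.symm, ?_⟩
    · rw [← ht] at h1; exact_mod_cast h1
    · rw [not_le]; exact ht ▸ h2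
  · rintro ⟨t, htn, h1, h2⟩
    rw [not_le] at h2
    exact ⟨h1.trans (by exact_mod_cast htn), lt_of_le_of_lt h1 h2⟩

lemma Aunion :
    (⋃ n : ℕ, {ω' : Ω | hitTime O (fun t => proc t ω') ≤ (n : ℕ∞) ∧
      hitTime O (fun t => proc t ω') < hitTime Kᶜ (fun t => proc t ω')}) =
    {ω' : Ω | hitTime O (fun t => proc t ω') < hitTime Kᶜ (fun t => proc t ω') ∧
      hitTime O (fun t => proc t ω') < ⊤} := by
  ext ω
  simp only [Set.mem_iUnion, Set.mem_setOf_eq]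
  constructor
  · rintro ⟨n, h1, h2⟩
    exact ⟨h2, lt_of_le_of_lt h1 (ENat.coe_lt_top n)⟩
  · rintro ⟨h2, h1⟩
    have hne : hitTime O (fun t => proc t ω) ≠ ⊤ := h1.ne
    exact ⟨(hitTime O (fun t => proc t ω)).toNat, le_of_eq (ENat.coe_toNat hne).symm, h2⟩

lemma key_pointwise (hOK : O ⊆ K) (ψ : X → ℝ) (hψ0 : ∀ y, 0 ≤ ψ y)
    (hψO : ∀ y ∈ O, ψ y = 1) (n : ℕ) (ω : Ω) :
    ({ω' : Ω | ((n + 1 : ℕ) : ℕ∞) < stopMin O K proc ω'}).indicator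
        (fun ω' => ψ (proc (n + 1) ω')) ω +
      ({ω' : Ω | hitTime O (fun t => proc t ω') ≤ ((n + 1 : ℕ) : ℕ∞) ∧
        hitTime O (fun t => proc t ω') < hitTime Kᶜ (fun t => proc t ω')}).indicator 1 ω ≤
    ({ω' : Ω | (n : ℕ∞) < stopMin O K proc ω'}).indicator
        (fun ω' => K.indicator ψ (proc (n + 1) ω')) ω +
      ({ω' : Ω | hitTime O (fun t => proc t ω') ≤ (n : ℕ∞) ∧
        hitTime O (fun t => proc t ω') < hitTime Kᶜ (fun t => proc t ω')}).indicator 1 ω := by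
  have hindnonneg1 : (0:ℝ) ≤ ({ω' : Ω | (n : ℕ∞) < stopMin O K proc ω'}).indicator
      (fun ω' => K.indicator ψ (proc (n + 1) ω')) ω := by
    apply Set.indicator_nonneg
    intro a _
    exact Set.indicator_nonneg (fun y _ => hψ0 y) _
  by_cases h1 : ((n + 1 : ℕ) : ℕ∞) < stopMin O K proc ω
  · have hn : (n : ℕ∞) < stopMin O K proc ω :=
      lt_of_le_of_lt (by exact_mod_cast Nat.le_succ n) h1
    have hτ : ((n + 1 : ℕ) : ℕ∞) < hitTime O (fun t => proc t ω) :=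
      lt_of_lt_of_le h1 (min_le_left _ _)
    have hτ' : ((n + 1 : ℕ) : ℕ∞) < hitTime Kᶜ (fun t => proc t ω) :=
      lt_of_lt_of_le h1 (min_le_right _ _)
    have hK : proc (n + 1) ω ∈ K := not_not.mp (lt_hitTime_iff.mp hτ' (n + 1) le_rfl)
    rw [Set.indicator_of_mem (show ω ∈ {ω' : Ω | ((n + 1 : ℕ) : ℕ∞) < stopMin O K proc ω'} from h1),
      Set.indicator_of_mem (show ω ∈ {ω' : Ω | (n : ℕ∞) < stopMin O K proc ω'} from hn),
      Set.indicator_of_notMem (show ω ∉ _ from fun hx =>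
        absurd (hx : _ ∧ _).1 (not_le.mpr hτ)),
      Set.indicator_of_notMem (show ω ∉ _ from fun hx =>
        absurd (hx : _ ∧ _).1 (not_le.mpr (lt_of_le_of_lt (by exact_mod_cast Nat.le_succ n) hτ))),
      Set.indicator_of_mem hK]
  · by_cases h2 : hitTime O (fun t => proc t ω) ≤ ((n + 1 : ℕ) : ℕ∞) ∧
        hitTime O (fun t => proc t ω) < hitTime Kᶜ (fun t => proc t ω)
    · by_cases h3 : hitTime O (fun t => proc t ω) ≤ (n : ℕ∞)
      · rw [Set.indicator_of_notMem (show ω ∉ {ω' : Ω | ((n + 1 : ℕ) : ℕ∞) < stopMin O K proc ω'} from h1),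
          Set.indicator_of_mem (show ω ∈ _ from h2),
          Set.indicator_of_mem (show ω ∈ {ω' : Ω | hitTime O (fun t => proc t ω') ≤ (n : ℕ∞) ∧
            hitTime O (fun t => proc t ω') < hitTime Kᶜ (fun t => proc t ω')} from ⟨h3, h2.2⟩)]
        simp only [Pi.one_apply, zero_add]
        linarith
      · -- τ = n + 1 exactly
        have hτgt : (n : ℕ∞) < hitTime O (fun t => proc t ω) := not_le.mp h3
        have hτeq : hitTime O (fun t => proc t ω) = ((n + 1 : ℕ) : ℕ∞) := by
          refine le_antisymm h2.1 ?_
          have := Order.add_one_le_of_lt hτgt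
          exact_mod_cast this
        have hσn : (n : ℕ∞) < stopMin O K proc ω :=
          lt_min hτgt (lt_of_lt_of_le hτgt h2.2.le)
        have hmemO : proc (n + 1) ω ∈ O := by
          have := hitTime_mem (S := O) (y := fun t => proc t ω) h2.1
          rwa [hτeq, ENat.toNat_coe] at this
        rw [Set.indicator_of_notMem (show ω ∉ {ω' : Ω | ((n + 1 : ℕ) : ℕ∞) < stopMin O K proc ω'} from h1),
          Set.indicator_of_mem (show ω ∈ _ from h2),
          Set.indicator_of_mem (show ω ∈ {ω' : Ω | (n : ℕ∞) < stopMin O K proc ω'} from hσn),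
          Set.indicator_of_notMem (show ω ∉ {ω' : Ω | hitTime O (fun t => proc t ω') ≤ (n : ℕ∞) ∧
            hitTime O (fun t => proc t ω') < hitTime Kᶜ (fun t => proc t ω')} from
            fun hx => h3 hx.1),
          Set.indicator_of_mem (hOK hmemO), hψO _ hmemO]
        simp
    · have h2' : ω ∉ {ω' : Ω | hitTime O (fun t => proc t ω') ≤ (n : ℕ∞) ∧
          hitTime O (fun t => proc t ω') < hitTime Kᶜ (fun t => proc t ω')} := by
        intro hx
        exact h2 ⟨hx.1.trans (by exact_mod_cast Nat.le_succ n), hx.2⟩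
      rw [Set.indicator_of_notMem (show ω ∉ {ω' : Ω | ((n + 1 : ℕ) : ℕ∞) < stopMin O K proc ω'} from h1),
        Set.indicator_of_notMem (show ω ∉ _ from h2),
        Set.indicator_of_notMem h2']
      simpa using hindnonneg1

lemma base_pointwise (hOK : O ⊆ K) (ψ : X → ℝ) (hψ0 : ∀ y, 0 ≤ ψ y)
    (hψO : ∀ y ∈ O, ψ y = 1) (ω : Ω) :
    ({ω' : Ω | ((0 : ℕ) : ℕ∞) < stopMin O K proc ω'}).indicator
        (fun ω' => ψ (proc 0 ω')) ω +
      ({ω' : Ω | hitTime O (fun t => proc t ω') ≤ ((0 : ℕ) : ℕ∞) ∧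
        hitTime O (fun t => proc t ω') < hitTime Kᶜ (fun t => proc t ω')}).indicator 1 ω ≤
      ψ (proc 0 ω) := by
  by_cases h1 : ((0 : ℕ) : ℕ∞) < stopMin O K proc ω
  · have hτ : ((0 : ℕ) : ℕ∞) < hitTime O (fun t => proc t ω) :=
      lt_of_lt_of_le h1 (min_le_left _ _)
    rw [Set.indicator_of_mem (show ω ∈ {ω' : Ω | ((0 : ℕ) : ℕ∞) < stopMin O K proc ω'} from h1),
      Set.indicator_of_notMem (show ω ∉ _ from fun hx =>
        absurd (hx : _ ∧ _).1 (not_le.mpr hτ))]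
    simp
  · by_cases h2 : hitTime O (fun t => proc t ω) ≤ ((0 : ℕ) : ℕ∞) ∧
        hitTime O (fun t => proc t ω) < hitTime Kᶜ (fun t => proc t ω)
    · have hτeq : hitTime O (fun t => proc t ω) = ((0 : ℕ) : ℕ∞) := le_antisymm h2.1 (zero_le)
      have hmemO : proc 0 ω ∈ O := by
        have := hitTime_mem (S := O) (y := fun t => proc t ω) h2.1
        rwa [hτeq, ENat.toNat_coe] at this
      rw [Set.indicator_of_notMem (show ω ∉ {ω' : Ω | ((0 : ℕ) : ℕ∞) < stopMin O K proc ω'} from h1),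
        Set.indicator_of_mem (show ω ∈ _ from h2), hψO _ hmemO]
      simp
    · rw [Set.indicator_of_notMem (show ω ∉ {ω' : Ω | ((0 : ℕ) : ℕ∞) < stopMin O K proc ω'} from h1),
        Set.indicator_of_notMem (show ω ∉ _ from h2)]
      simpa using hψ0 (proc 0 ω)

end Stmt9Aux

open Stmt9Aux in
theorem stmt9 {Ω X : Type*} {m0 : MeasurableSpace Ω} [MeasurableSpace X]
    (P : Measure Ω) [IsProbabilityMeasure P] (ℱ : Filtration ℕ m0)
    (O K : Set X) (hmO : MeasurableSet O) (hmK : MeasurableSet K) (hOK : O ⊂ K)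
    (proc : ℕ → Ω → X) (hadapt : ∀ n, Measurable[ℱ n] (proc n))
    (x : X) (hx0 : ∀ᵐ ω ∂P, proc 0 ω = x)
    (hτstop : ∀ n : ℕ,
      MeasurableSet[ℱ n] {ω | hitTime O (fun t => proc t ω) ≤ (n : ℕ∞)})
    (hτ'stop : ∀ n : ℕ,
      MeasurableSet[ℱ n] {ω | hitTime Kᶜ (fun t => proc t ω) ≤ (n : ℕ∞)})
    (ψ : X → ℝ) (hψmeas : Measurable ψ) (hψ0 : ∀ y, 0 ≤ ψ y) (hψ1 : ∀ y, ψ y ≤ 1)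
    (hψO : ∀ y ∈ O, ψ y = 1) (hψK : ∀ y ∉ K, ψ y = 0)
    -- the conservation inequality: a.s. on `{σ > n}`,
    -- `E[1_K(x_{n+1}) ψ(x_{n+1}) | F_n] ≤ ψ(x_n)`
    (hcons : ∀ n : ℕ, ∀ᵐ ω ∂P, (n : ℕ∞) < stopMin O K proc ω →
      (P[fun ω' => K.indicator ψ (proc (n + 1) ω') | ℱ n]) ω ≤ ψ (proc n ω)) :
    ∃ Λ : ℝ, Tendsto (fun n => ∫ ω, zeta O K proc x ψ n ω ∂P) atTop (nhds Λ) ∧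
      -- (a) equalization iff the second term vanishes in the limit
      ((Λ = (P {ω | hitTime O (fun t => proc t ω) < hitTime Kᶜ (fun t => proc t ω) ∧
            hitTime O (fun t => proc t ω) < ⊤}).toReal) ↔
        Tendsto (fun n => ∫ ω, zetaM O K proc x ψ n ω ∂P) atTop (nhds 0)) ∧
      -- (b) optimality iff thrifty and equalizing
      ((P {ω | hitTime O (fun t => proc t ω) < hitTime Kᶜ (fun t => proc t ω) ∧
            hitTime O (fun t => proc t ω) < ⊤}).toReal = ψ x ↔
        (ψ x = Λ ∧
          Λ = (P {ω | hitTime O (fun t => proc t ω) < hitTime Kᶜ (fun t => proc t ω) ∧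
            hitTime O (fun t => proc t ω) < ⊤}).toReal)) := by
  classical
  set A : ℕ → Set Ω := fun n => {ω' : Ω | hitTime O (fun t => proc t ω') ≤ (n : ℕ∞) ∧
    hitTime O (fun t => proc t ω') < hitTime Kᶜ (fun t => proc t ω')} with hAdef
  set S : ℕ → Set Ω := fun n => {ω' : Ω | (n : ℕ∞) < stopMin O K proc ω'} with hSdef
  have hm : ∀ n, Measurable (proc n) := fun n => (hadapt n).mono (ℱ.le n) le_rfl
  have hmA : ∀ n, MeasurableSet (A n) := by
    intro n
    rw [hAdef]
    simp only
    rw [Aset_eq]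
    exact Finset.measurableSet_biUnion _ fun t _ =>
      ((ℱ.le t _ (hτstop t)).inter (ℱ.le t _ (hτ'stop t)).compl)
  have hmS : ∀ n, MeasurableSet[ℱ n] (S n) := by
    intro n
    have hSeq : S n = ({ω | hitTime O (fun t => proc t ω) ≤ (n : ℕ∞)} ∪
        {ω | hitTime Kᶜ (fun t => proc t ω) ≤ (n : ℕ∞)})ᶜ := by
      ext ω
      simp only [hSdef, Set.mem_setOf_eq, Set.mem_compl_iff, Set.mem_union, not_or, not_le,
        stopMin, lt_min_iff]
    rw [hSeq]
    exact ((hτstop n).union (hτ'stop n)).compl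
  have hmS0 : ∀ n, MeasurableSet (S n) := fun n => ℱ.le n _ (hmS n)
  -- integrability
  have hgbd : ∀ (y : X), ‖K.indicator ψ y‖ ≤ 1 := by
    intro y
    rw [Real.norm_eq_abs, abs_le]
    constructor
    · refine neg_nonpos.mpr ?_ |>.trans (Set.indicator_nonneg (fun z _ => hψ0 z) y) <;> norm_num
    · exact Set.indicator_le' (fun z _ => hψ1 z) (fun z _ => zero_le_one) y
  have hgmeas : ∀ n, Measurable fun ω => K.indicator ψ (proc n ω) :=
    fun n => (hψmeas.indicator hmK).comp (hm n)
  have hgint : ∀ n, Integrable (fun ω => K.indicator ψ (proc n ω)) P := by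
    intro n
    refine Integrable.mono' (integrable_const 1) (hgmeas n).aestronglyMeasurable ?_
    exact Filter.Eventually.of_forall fun ω => hgbd (proc n ω)
  have hψint : ∀ n, Integrable (fun ω => ψ (proc n ω)) P := by
    intro n
    refine Integrable.mono' (integrable_const 1) (hψmeas.comp (hm n)).aestronglyMeasurable ?_
    refine Filter.Eventually.of_forall fun ω => ?_
    rw [Real.norm_eq_abs, abs_le]
    exact ⟨by linarith [hψ0 (proc n ω)], hψ1 (proc n ω)⟩
  have hMrw : ∀ n : ℕ, (fun ω => zetaM O K proc x ψ (n + 1) ω) =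
      (S n).indicator (fun ω => K.indicator ψ (proc (n + 1) ω)) :=
    fun n => funext fun ω => zetaM_succ x ψ n ω
  have hMint : ∀ n : ℕ, Integrable (fun ω => zetaM O K proc x ψ (n + 1) ω) P := by
    intro n
    rw [hMrw n]
    exact (hgint (n + 1)).indicator (hmS0 n)
  have hindAint : ∀ n : ℕ, Integrable ((A n).indicator (1 : Ω → ℝ)) P :=
    fun n => (integrable_const 1).indicator (hmA n)
  -- the sequence c
  set c : ℕ → ℝ := fun n => (∫ ω, zetaM O K proc x ψ (n + 1) ω ∂P) + (P (A n)).toReal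
    with hcdef
  have hζc : ∀ n : ℕ, ∫ ω, zeta O K proc x ψ (n + 1) ω ∂P = c n := by
    intro n
    have hrw : (fun ω => zeta O K proc x ψ (n + 1) ω) =
        fun ω => (A n).indicator 1 ω + zetaM O K proc x ψ (n + 1) ω :=
      funext fun ω => zeta_succ hOK.subset x ψ n ω
    rw [hrw, integral_add (hindAint n) (hMint n), integral_indicator_one (hmA n), hcdef, measureReal_def]
    ring
  -- condexp step: ∫ M_{n+1} over the whole space is at most ∫ over S n of ψ(x_n)
  have hcondstep : ∀ n : ℕ, (∫ ω, zetaM O K proc x ψ (n + 1) ω ∂P) ≤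
      ∫ ω, (S n).indicator (fun ω' => ψ (proc n ω')) ω ∂P := by
    intro n
    rw [hMrw n, integral_indicator (hmS0 n), integral_indicator (hmS0 n),
      ← setIntegral_condExp (ℱ.le n) (hgint (n + 1)) (hmS n)]
    refine integral_mono_ae (integrable_condExp.restrict) ((hψint n).restrict) ?_
    exact (ae_restrict_iff' (hmS0 n)).mpr (hcons n)
  -- step inequality
  have hstep : ∀ n : ℕ, c (n + 1) ≤ c n := by
    intro n
    have h1 := hcondstep (n + 1)
    have h2 : (∫ ω, (S (n + 1)).indicator (fun ω' => ψ (proc (n + 1) ω')) ω ∂P) +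
        (P (A (n + 1))).toReal ≤
        (∫ ω, zetaM O K proc x ψ (n + 1) ω ∂P) + (P (A n)).toReal := by
      rw [hMrw n, ← measureReal_def, ← measureReal_def, ← integral_indicator_one (hmA (n + 1)), ← integral_indicator_one (hmA n),
        ← integral_add (((hψint (n + 1)).indicator (hmS0 (n + 1)))) (hindAint (n + 1)),
        ← integral_add ((hgint (n + 1)).indicator (hmS0 n)) (hindAint n)]
      refine integral_mono
        (((hψint (n + 1)).indicator (hmS0 (n + 1))).add (hindAint (n + 1)))
        (((hgint (n + 1)).indicator (hmS0 n)).add (hindAint n)) ?_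
      intro ω
      exact key_pointwise hOK.subset ψ hψ0 hψO n ω
    calc c (n + 1) = (∫ ω, zetaM O K proc x ψ (n + 2) ω ∂P) + (P (A (n + 1))).toReal := rfl
      _ ≤ (∫ ω, (S (n + 1)).indicator (fun ω' => ψ (proc (n + 1) ω')) ω ∂P) +
          (P (A (n + 1))).toReal := by linarith
      _ ≤ c n := h2
  have hbase : c 0 ≤ ψ x := by
    have h1 := hcondstep 0
    have h2 : (∫ ω, (S 0).indicator (fun ω' => ψ (proc 0 ω')) ω ∂P) + (P (A 0)).toReal ≤
        ∫ ω, ψ (proc 0 ω) ∂P := by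
      rw [← measureReal_def, ← integral_indicator_one (hmA 0),
        ← integral_add (((hψint 0).indicator (hmS0 0))) (hindAint 0)]
      refine integral_mono ((((hψint 0)).indicator (hmS0 0)).add (hindAint 0)) (hψint 0) ?_
      intro ω
      exact base_pointwise hOK.subset ψ hψ0 hψO ω
    have h3 : ∫ ω, ψ (proc 0 ω) ∂P = ψ x := by
      rw [integral_congr_ae (hx0.mono fun ω hω => by rw [hω]), integral_const]
      simp
    calc c 0 = (∫ ω, zetaM O K proc x ψ 1 ω ∂P) + (P (A 0)).toReal := rfl
      _ ≤ (∫ ω, (S 0).indicator (fun ω' => ψ (proc 0 ω')) ω ∂P) + (P (A 0)).toReal := by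
          linarith
      _ ≤ ψ x := h3 ▸ h2
  have hMnonneg : ∀ n : ℕ, 0 ≤ ∫ ω, zetaM O K proc x ψ (n + 1) ω ∂P := by
    intro n
    rw [hMrw n]
    refine integral_nonneg fun ω => ?_
    exact Set.indicator_nonneg (fun a _ => Set.indicator_nonneg (fun z _ => hψ0 z) _) ω
  have hcnonneg : ∀ n, 0 ≤ c n := fun n => add_nonneg (hMnonneg n) ENNReal.toReal_nonneg
  have hcant : Antitone c := antitone_nat_of_succ_le hstep
  have hbdd : BddBelow (Set.range c) := ⟨0, by rintro y ⟨n, rfl⟩; exact hcnonneg n⟩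
  have hctend : Tendsto c atTop (nhds (⨅ n, c n)) := tendsto_atTop_ciInf hcant hbdd
  set Λ : ℝ := ⨅ n, c n with hΛdef
  set V : ℝ := (P {ω | hitTime O (fun t => proc t ω) < hitTime Kᶜ (fun t => proc t ω) ∧
      hitTime O (fun t => proc t ω) < ⊤}).toReal with hVdef
  -- convergence of P(A n) to V
  have hPA : Tendsto (fun n => (P (A n)).toReal) atTop (nhds V) := by
    have hmono : Monotone A := fun m n hmn => Amono hmn
    have h1 : Tendsto (fun n => P (A n)) atTop (nhds (P (⋃ n, A n))) :=
      tendsto_measure_iUnion_atTop hmono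
    rw [show (⋃ n, A n) = {ω | hitTime O (fun t => proc t ω) < hitTime Kᶜ (fun t => proc t ω) ∧
      hitTime O (fun t => proc t ω) < ⊤} from Aunion] at h1
    exact (ENNReal.tendsto_toReal (measure_ne_top P _)).comp h1
  have hMten : Tendsto (fun n => ∫ ω, zetaM O K proc x ψ (n + 1) ω ∂P) atTop
      (nhds (Λ - V)) := by
    have heq : (fun n => ∫ ω, zetaM O K proc x ψ (n + 1) ω ∂P) =
        fun n => c n - (P (A n)).toReal := by
      funext n
      rw [hcdef]
      ring
    rw [heq]
    exact hctend.sub hPA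
  have hMten' : Tendsto (fun n => ∫ ω, zetaM O K proc x ψ n ω ∂P) atTop (nhds (Λ - V)) :=
    (tendsto_add_atTop_iff_nat 1).mp hMten
  have hζten : Tendsto (fun n => ∫ ω, zeta O K proc x ψ n ω ∂P) atTop (nhds Λ) := by
    refine (tendsto_add_atTop_iff_nat 1).mp ?_
    have : (fun n => ∫ ω, zeta O K proc x ψ (n + 1) ω ∂P) = c := funext hζc
    rw [this]
    exact hctend
  have hLnonneg : 0 ≤ Λ - V := ge_of_tendsto' hMten fun n => hMnonneg n
  have hΛle : Λ ≤ ψ x := le_trans (ciInf_le hbdd 0) hbase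
  refine ⟨Λ, hζten, ?_, ?_⟩
  · constructor
    · intro hEq
      have : Λ - V = 0 := by rw [hEq, hVdef]; ring
      rwa [this] at hMten'
    · intro h0
      have := tendsto_nhds_unique hMten' h0
      rw [hVdef] at this ⊢
      linarith
  · constructor
    · intro hV
      rw [hVdef] at hV hLnonneg
      constructor
      · linarith
      · rw [hVdef]; linarith
    · rintro ⟨h1, h2⟩
      rw [← h2, ← h1]
end

section
/- Let ψ: X→[0,1] be measurable with ψ = 1 on O and ψ = 0 on X∖K, and suppose that for every n ∈ ℕ, P-almost surely on the event {σ > n}, E[1_K(x_{n+1}) ψ(x_{n+1}) | F_n] ≤ ψ(x_n). Then the following are equivalent: (i) lim_{n→∞} E[ζ_n] = ψ(x) (thriftiness); (ii) the process (ζ_n)_{n∈ℕ} associated with ψ is an (F_n)-martingale under P; (iii) for every n ∈ ℕ, P-almost surely on the event {σ > n}, E[1_K(x_{n+1}) ψ(x_{n+1}) | F_n] = ψ(x_n) (the action at stage n conserves ψ). -/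
open MeasureTheory Set Filter

section aux
variable {Ω X : Type*}

lemma stmt10_hitTime_le_iff (S : Set X) (x : ℕ → X) (n : ℕ) :
    hitTime S x ≤ (n : ℕ∞) ↔ ∃ t ≤ n, x t ∈ S := by
  constructor
  · intro h
    by_contra hc
    push_neg at hc
    have h2 : ((n : ℕ∞) + 1) ≤ hitTime S x := by
      apply le_sInf
      rintro b ⟨t, ht, rfl⟩
      have hnt : n < t := by
        by_contra hle
        exact hc t (le_of_not_gt hle) ht
      have : ((n + 1 : ℕ) : ℕ∞) ≤ (t : ℕ∞) := by exact_mod_cast hnt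
      simpa using this
    have h3 : (n : ℕ∞) + 1 ≤ (n : ℕ∞) := le_trans h2 h
    have h4 : (n : ℕ∞) < (n : ℕ∞) + 1 := by
      have : ((n : ℕ) : ℕ∞) < ((n + 1 : ℕ) : ℕ∞) := by exact_mod_cast Nat.lt_succ_self n
      simpa using this
    exact absurd h3 (not_le.mpr h4)
  · rintro ⟨t, ht, hx⟩
    exact le_trans (sInf_le ⟨t, hx, rfl⟩) (by exact_mod_cast ht : ((t : ℕ∞)) ≤ ((n : ℕ∞)))

lemma stmt10_lt_stopMin_iff (O K : Set X) (proc : ℕ → Ω → X) (n : ℕ) (ω : Ω) :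
    (n : ℕ∞) < stopMin O K proc ω ↔ ∀ t ≤ n, proc t ω ∉ O ∧ proc t ω ∈ K := by
  rw [stopMin, lt_min_iff]
  constructor
  · rintro ⟨h1, h2⟩ t ht
    have h1' := (stmt10_hitTime_le_iff O (fun t => proc t ω) n).not.mp (not_le.mpr h1)
    have h2' := (stmt10_hitTime_le_iff Kᶜ (fun t => proc t ω) n).not.mp (not_le.mpr h2)
    push_neg at h1' h2'
    exact ⟨h1' t ht, not_not.mp (h2' t ht)⟩
  · intro h
    constructor
    · refine lt_of_not_ge fun hle => ?_
      obtain ⟨t, ht, hmem⟩ := (stmt10_hitTime_le_iff O (fun t => proc t ω) n).mp hle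
      exact (h t ht).1 hmem
    · refine lt_of_not_ge fun hle => ?_
      obtain ⟨t, ht, hmem⟩ := (stmt10_hitTime_le_iff Kᶜ (fun t => proc t ω) n).mp hle
      exact hmem (h t ht).2

lemma stmt10_stopIdx_of_le' {O K : Set X} {proc : ℕ → Ω → X} {n : ℕ} {ω : Ω}
    (h : (n : ℕ∞) ≤ stopMin O K proc ω) : stopIdx O K proc n ω = n := by
  unfold stopIdx
  rw [min_eq_left h, ENat.toNat_coe]

lemma stmt10_stopIdx_of_le {O K : Set X} {proc : ℕ → Ω → X} {n m : ℕ} {ω : Ω}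
    (h : stopMin O K proc ω ≤ (n : ℕ∞)) (hnm : n ≤ m) :
    stopIdx O K proc m ω = stopIdx O K proc n ω := by
  unfold stopIdx
  rw [min_eq_right h, min_eq_right (le_trans h (by exact_mod_cast hnm))]

lemma stmt10_succ_le {m : ℕ} {a : ℕ∞} (h : (m : ℕ∞) < a) : ((m + 1 : ℕ) : ℕ∞) ≤ a := by
  have := (ENat.add_one_le_iff (by simp : (m : ℕ∞) ≠ ⊤)).mpr h
  simpa using this

lemma stmt10_stopIdx_le (O K : Set X) (proc : ℕ → Ω → X) (n : ℕ) (ω : Ω) :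
    stopIdx O K proc n ω ≤ n := by
  rcases le_total ((n : ℕ∞)) (stopMin O K proc ω) with h | h
  · rw [stmt10_stopIdx_of_le' h]
  · unfold stopIdx
    rw [min_eq_right h]
    exact ENat.toNat_le_of_le_coe h

lemma stmt10_stopIdx_eq_sum (O K : Set X) (proc : ℕ → Ω → X) (n : ℕ) (ω : Ω) :
    stopIdx O K proc n ω
      = ∑ t ∈ Finset.range n, if (t : ℕ∞) < stopMin O K proc ω then 1 else 0 := by
  induction n with
  | zero => simp [stmt10_stopIdx_of_le' (by simp : ((0 : ℕ) : ℕ∞) ≤ _)]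
  | succ n ih =>
    rw [Finset.sum_range_succ, ← ih]
    rcases lt_or_ge (n : ℕ∞) (stopMin O K proc ω) with h | h
    · rw [if_pos h, stmt10_stopIdx_of_le' h.le, stmt10_stopIdx_of_le' (stmt10_succ_le h)]
    · rw [if_neg (not_lt.mpr h), stmt10_stopIdx_of_le h (Nat.le_succ n), add_zero]

lemma stmt10_exit_at {O K : Set X} {proc : ℕ → Ω → X} {n : ℕ} {ω : Ω}
    (h1 : stopMin O K proc ω ≤ (n : ℕ∞))
    (h2 : ∀ t, t < n → proc t ω ∉ O ∧ proc t ω ∈ K) :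
    proc n ω ∈ O ∨ proc n ω ∉ K := by
  rcases min_le_iff.mp h1 with h | h
  · obtain ⟨t, ht, hto⟩ := (stmt10_hitTime_le_iff O (fun t => proc t ω) n).mp h
    rcases lt_or_eq_of_le ht with hlt | rfl
    · exact absurd hto ((h2 t hlt).1)
    · exact Or.inl hto
  · obtain ⟨t, ht, hto⟩ := (stmt10_hitTime_le_iff Kᶜ (fun t => proc t ω) n).mp h
    rcases lt_or_eq_of_le ht with hlt | rfl
    · exact absurd ((h2 t hlt).2) hto
    · exact Or.inr hto

lemma stmt10_sum_trunc {N m : ℕ} (h : m ≤ N) (f : ℕ → ℝ) :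
    ∑ t ∈ Finset.range (m + 1), f t
      = ∑ t ∈ Finset.range (N + 1), if t ≤ m then f t else 0 := by
  rw [← Finset.sum_subset (Finset.range_subset_range.mpr (by omega : m + 1 ≤ N + 1))
      (fun t ht hnt => if_neg (by
        simp only [Finset.mem_range] at ht hnt
        omega))]
  exact (Finset.sum_congr rfl fun t ht =>
    (if_pos (by simpa [Nat.lt_succ_iff] using Finset.mem_range.mp ht))).symm

lemma stmt10_meas_comp {m : MeasurableSpace Ω} {mX : MeasurableSpace X} {f : Ω → ℕ}
    {proc : ℕ → Ω → X} {n : ℕ}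
    (hf : Measurable[m] f) (hfle : ∀ ω, f ω ≤ n)
    (hproc : ∀ k, k ≤ n → Measurable[m] (proc k)) :
    Measurable[m] (fun ω => proc (f ω) ω) := by
  intro S hS
  have hEq : (fun ω => proc (f ω) ω) ⁻¹' S
      = ⋃ k ∈ Finset.range (n + 1), (f ⁻¹' {k} ∩ proc k ⁻¹' S) := by
    ext ω
    simp only [mem_preimage, Finset.mem_range, mem_iUnion, mem_inter_iff, mem_singleton_iff,
      mem_preimage]
    constructor
    · intro h
      exact ⟨f ω, Nat.lt_succ_of_le (hfle ω), rfl, h⟩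
    · rintro ⟨k, hk, hfk, hmem⟩
      rwa [hfk]
  rw [hEq]
  exact MeasurableSet.biUnion (Finset.range (n + 1)).countable_toSet
    (fun k hk => by
      have hk' : k ≤ n := by
        have : k ∈ Finset.range (n + 1) := hk
        simp only [Finset.mem_range] at this
        omega
      exact (hf (measurableSet_singleton k)).inter (hproc k hk' hS))

end aux


section zeta
variable {Ω X : Type*} {O K : Set X} {proc : ℕ → Ω → X} {x : X} {ψ : X → ℝ}

lemma stmt10_zeta_eq_psi (hOK : O ⊆ K) (hψO : ∀ y ∈ O, ψ y = 1)
    {n : ℕ} {ω : Ω} (hx : proc 0 ω = x) (h : (n : ℕ∞) < stopMin O K proc ω) :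
    zeta O K proc x ψ n ω = ψ (proc n ω) := by
  cases n with
  | zero => simp [zeta, hx]
  | succ m =>
    have hmem := (stmt10_lt_stopMin_iff O K proc (m + 1) ω).mp h
    have hm : (m : ℕ∞) < stopMin O K proc ω :=
      lt_of_le_of_lt (by exact_mod_cast Nat.le_succ m) h
    have e0 : stopIdx O K proc m ω = m := stmt10_stopIdx_of_le' hm.le
    have e1 : stopIdx O K proc (m + 1) ω = m + 1 := stmt10_stopIdx_of_le' h.le
    simp only [zeta, e0, e1]
    rw [Finset.sum_eq_zero fun t ht =>
      indicator_of_notMem (hmem t (by have := Finset.mem_range.mp ht; omega)).1 _]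
    rw [indicator_of_mem
        (show proc m ω ∈ K \ O from ⟨(hmem m (Nat.le_succ m)).2, (hmem m (Nat.le_succ m)).1⟩),
      indicator_of_mem (hmem (m + 1) le_rfl).2]
    simp

lemma stmt10_zeta_succ_of_lt {n : ℕ} {ω : Ω} (h : (n : ℕ∞) < stopMin O K proc ω) :
    zeta O K proc x ψ (n + 1) ω = K.indicator ψ (proc (n + 1) ω) := by
  have hmem := (stmt10_lt_stopMin_iff O K proc n ω).mp h
  have e0 : stopIdx O K proc n ω = n := stmt10_stopIdx_of_le' h.le
  have e1 : stopIdx O K proc (n + 1) ω = n + 1 := stmt10_stopIdx_of_le' (stmt10_succ_le h)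
  simp only [zeta, e0, e1]
  rw [Finset.sum_eq_zero fun t ht =>
    indicator_of_notMem (hmem t (by simpa [Nat.lt_succ_iff] using Finset.mem_range.mp ht)).1 _]
  rw [indicator_of_mem (show proc n ω ∈ K \ O from ⟨(hmem n le_rfl).2, (hmem n le_rfl).1⟩)]
  simp

lemma stmt10_zeta_succ_of_le (hOK : O ⊆ K) (hψO : ∀ y ∈ O, ψ y = 1) (hψK : ∀ y ∉ K, ψ y = 0)
    {n : ℕ} {ω : Ω} (hx : proc 0 ω = x) (h : stopMin O K proc ω ≤ (n : ℕ∞)) :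
    zeta O K proc x ψ (n + 1) ω = zeta O K proc x ψ n ω := by
  cases n with
  | zero =>
    have hexit : proc 0 ω ∈ O ∨ proc 0 ω ∉ K :=
      stmt10_exit_at h (fun t ht => absurd ht (Nat.not_lt_zero t))
    have h00 : stopIdx O K proc 0 ω = 0 := stmt10_stopIdx_of_le' (by simp)
    have h10 : stopIdx O K proc 1 ω = stopIdx O K proc 0 ω := stmt10_stopIdx_of_le h zero_le_one
    simp only [zeta, h00, h10, zero_add, Finset.range_one, Finset.sum_singleton]
    rcases hexit with hO | hK
    · rw [indicator_of_mem hO, indicator_of_notMem (fun hm => hm.2 hO), ← hx,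
        hψO _ hO]
      simp
    · rw [indicator_of_notMem (fun hm => hK (hOK hm)), indicator_of_notMem (fun hm => hK hm.1),
        ← hx, hψK _ hK]
      simp
  | succ m =>
    rcases le_or_gt (stopMin O K proc ω) ((m : ℕ∞)) with hm | hm
    · have e1 : stopIdx O K proc (m + 1) ω = stopIdx O K proc m ω :=
        stmt10_stopIdx_of_le hm (Nat.le_succ m)
      have e2 : stopIdx O K proc (m + 2) ω = stopIdx O K proc m ω :=
        stmt10_stopIdx_of_le hm (by omega)
      simp only [zeta, e1, e2]
    · have hmem := (stmt10_lt_stopMin_iff O K proc m ω).mp hm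
      have hexit : proc (m + 1) ω ∈ O ∨ proc (m + 1) ω ∉ K :=
        stmt10_exit_at h (fun t ht => hmem t (by omega))
      have e0 : stopIdx O K proc m ω = m := stmt10_stopIdx_of_le' hm.le
      have e1 : stopIdx O K proc (m + 1) ω = m + 1 := stmt10_stopIdx_of_le' (stmt10_succ_le hm)
      have e2 : stopIdx O K proc (m + 2) ω = stopIdx O K proc (m + 1) ω :=
        stmt10_stopIdx_of_le h (by omega)
      simp only [zeta, e0, e1, e2]
      rw [Finset.sum_range_succ]
      rw [indicator_of_mem (show proc m ω ∈ K \ O from ⟨(hmem m le_rfl).2, (hmem m le_rfl).1⟩)]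
      rcases hexit with hO | hK
      · rw [indicator_of_mem hO, indicator_of_notMem (fun hmm => hmm.2 hO),
          indicator_of_mem (hOK hO), hψO _ hO]
        simp
      · rw [indicator_of_notMem (fun hmm => hK (hOK hmm)),
          indicator_of_notMem (fun hmm => hK hmm.1), indicator_of_notMem hK]
        simp

end zeta


theorem stmt10 {Ω X : Type*} {m0 : MeasurableSpace Ω} [MeasurableSpace X]
    (P : Measure Ω) [IsProbabilityMeasure P] (ℱ : Filtration ℕ m0)
    (O K : Set X) (hmO : MeasurableSet O) (hmK : MeasurableSet K) (hOK : O ⊂ K)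
    (proc : ℕ → Ω → X) (hadapt : ∀ n, Measurable[ℱ n] (proc n))
    (x : X) (hx0 : ∀ᵐ ω ∂P, proc 0 ω = x)
    (hτstop : ∀ n : ℕ,
      MeasurableSet[ℱ n] {ω | hitTime O (fun t => proc t ω) ≤ (n : ℕ∞)})
    (hτ'stop : ∀ n : ℕ,
      MeasurableSet[ℱ n] {ω | hitTime Kᶜ (fun t => proc t ω) ≤ (n : ℕ∞)})
    (ψ : X → ℝ) (hψmeas : Measurable ψ) (hψ0 : ∀ y, 0 ≤ ψ y) (hψ1 : ∀ y, ψ y ≤ 1)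
    (hψO : ∀ y ∈ O, ψ y = 1) (hψK : ∀ y ∉ K, ψ y = 0)
    -- the conservation inequality: a.s. on `{σ > n}`,
    -- `E[1_K(x_{n+1}) ψ(x_{n+1}) | F_n] ≤ ψ(x_n)`
    (hcons : ∀ n : ℕ, ∀ᵐ ω ∂P, (n : ℕ∞) < stopMin O K proc ω →
      (P[fun ω' => K.indicator ψ (proc (n + 1) ω') | ℱ n]) ω ≤ ψ (proc n ω)) :
    ((Tendsto (fun n => ∫ ω, zeta O K proc x ψ n ω ∂P) atTop (nhds (ψ x))) ↔
      Martingale (zeta O K proc x ψ) ℱ P) ∧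
    (Martingale (zeta O K proc x ψ) ℱ P ↔
      ∀ n : ℕ, ∀ᵐ ω ∂P, (n : ℕ∞) < stopMin O K proc ω →
        (P[fun ω' => K.indicator ψ (proc (n + 1) ω') | ℱ n]) ω = ψ (proc n ω)) := by
  have hOK' : O ⊆ K := hOK.subset
  set A : ℕ → Set Ω := fun n => {ω | stopMin O K proc ω ≤ (n : ℕ∞)} with hA
  -- measurability of the stopped sets
  have hAmeas : ∀ n, MeasurableSet[ℱ n] (A n) := by
    intro n
    have h : A n = {ω | hitTime O (fun t => proc t ω) ≤ (n : ℕ∞)}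
        ∪ {ω | hitTime Kᶜ (fun t => proc t ω) ≤ (n : ℕ∞)} := by
      ext ω; simp [hA, stopMin, min_le_iff]
    rw [h]
    exact (hτstop n).union (hτ'stop n)
  -- measurability of stopIdx
  have hidx : ∀ n, Measurable[ℱ n] (stopIdx O K proc n) := by
    intro n
    have heq : stopIdx O K proc n = fun ω =>
        ∑ t ∈ Finset.range n, if (t : ℕ∞) < stopMin O K proc ω then 1 else 0 :=
      funext fun ω => stmt10_stopIdx_eq_sum O K proc n ω
    rw [heq]
    refine Finset.measurable_sum _ fun t ht => ?_
    have htn : t ≤ n := (Finset.mem_range.mp ht).le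
    have hts : MeasurableSet[ℱ n] {ω | (t : ℕ∞) < stopMin O K proc ω} := by
      have h2 : {ω | (t : ℕ∞) < stopMin O K proc ω} = (A t)ᶜ := by
        ext ω; simp [hA, not_le]
      rw [h2]
      exact ℱ.mono htn _ (hAmeas t).compl
    exact Measurable.ite hts measurable_const measurable_const
  -- measurability of the stopped process
  have hcomp : ∀ n, Measurable[ℱ n] (fun ω => proc (stopIdx O K proc n ω) ω) := fun n =>
    stmt10_meas_comp (hidx n) (stmt10_stopIdx_le O K proc n)
      (fun k hk => (hadapt k).mono (ℱ.mono hk) le_rfl)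
  -- adaptedness of zeta
  have hzadapt : ∀ n, StronglyMeasurable[ℱ n] (zeta O K proc x ψ n) := by
    intro n
    match n with
    | 0 => exact stronglyMeasurable_const
    | Nat.succ n =>
      refine Measurable.stronglyMeasurable ?_
      have hsum : Measurable[ℱ (n + 1)] (fun ω =>
          ∑ t ∈ Finset.range (stopIdx O K proc n ω + 1),
            O.indicator (1 : X → ℝ) (proc t ω)) := by
        have h1 : (fun ω => ∑ t ∈ Finset.range (stopIdx O K proc n ω + 1),
              O.indicator (1 : X → ℝ) (proc t ω))
            = fun ω => ∑ t ∈ Finset.range (n + 1),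
              if t ≤ stopIdx O K proc n ω then O.indicator (1 : X → ℝ) (proc t ω) else 0 :=
          funext fun ω => stmt10_sum_trunc (stmt10_stopIdx_le O K proc n ω) _
        rw [h1]
        refine Finset.measurable_sum _ fun t ht => ?_
        have htn : t ≤ n + 1 := (Finset.mem_range.mp ht).le
        have hts : MeasurableSet[ℱ (n + 1)] {ω | t ≤ stopIdx O K proc n ω} := by
          have := ((hidx n).mono (ℱ.mono (Nat.le_succ n)) le_rfl)
          exact this measurableSet_Ici
        exact Measurable.ite hts
          ((measurable_one.indicator hmO).comp ((hadapt t).mono (ℱ.mono htn) le_rfl))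
          measurable_const
      have hg1 : Measurable[ℱ (n + 1)] (fun ω =>
          (K \ O).indicator (1 : X → ℝ) (proc (stopIdx O K proc n ω) ω)) :=
        (measurable_one.indicator (hmK.diff hmO)).comp
          ((hcomp n).mono (ℱ.mono (Nat.le_succ n)) le_rfl)
      have hg2 : Measurable[ℱ (n + 1)] (fun ω =>
          K.indicator ψ (proc (stopIdx O K proc (n + 1) ω) ω)) :=
        (hψmeas.indicator hmK).comp (hcomp (n + 1))
      exact hsum.add (hg1.mul hg2)
  -- bounds and integrability
  have hind01 : ∀ (S : Set X) (y : X),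
      0 ≤ S.indicator (1 : X → ℝ) y ∧ S.indicator (1 : X → ℝ) y ≤ 1 := by
    intro S y
    classical
    rw [Set.indicator_apply]
    split_ifs <;> norm_num
  have hindψ : ∀ y : X, 0 ≤ K.indicator ψ y ∧ K.indicator ψ y ≤ 1 := by
    intro y
    classical
    rw [Set.indicator_apply]
    split_ifs
    · exact ⟨hψ0 y, hψ1 y⟩
    · norm_num
  have hbound : ∀ n ω, ‖zeta O K proc x ψ n ω‖ ≤ (n : ℝ) + 2 := by
    intro n ω
    match n with
    | 0 =>
      show ‖ψ x‖ ≤ _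
      rw [Real.norm_eq_abs, abs_of_nonneg (hψ0 x)]
      have := hψ1 x
      push_cast
      linarith
    | Nat.succ n =>
      have hs0 : 0 ≤ ∑ t ∈ Finset.range (stopIdx O K proc n ω + 1),
          O.indicator (1 : X → ℝ) (proc t ω) :=
        Finset.sum_nonneg fun t _ => (hind01 O (proc t ω)).1
      have hs1 : (∑ t ∈ Finset.range (stopIdx O K proc n ω + 1),
          O.indicator (1 : X → ℝ) (proc t ω)) ≤ (n : ℝ) + 1 := by
        calc (∑ t ∈ Finset.range (stopIdx O K proc n ω + 1),
            O.indicator (1 : X → ℝ) (proc t ω))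
            ≤ ∑ _t ∈ Finset.range (stopIdx O K proc n ω + 1), (1 : ℝ) :=
              Finset.sum_le_sum fun t _ => (hind01 O (proc t ω)).2
          _ = (stopIdx O K proc n ω + 1 : ℕ) := by simp
          _ ≤ (n : ℝ) + 1 := by
              have h := stmt10_stopIdx_le O K proc n ω
              have h2 : ((stopIdx O K proc n ω : ℝ)) ≤ (n : ℝ) := Nat.cast_le.mpr h
              push_cast
              linarith
      have hp0 : 0 ≤ (K \ O).indicator (1 : X → ℝ) (proc (stopIdx O K proc n ω) ω) *
          K.indicator ψ (proc (stopIdx O K proc (n + 1) ω) ω) :=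
        mul_nonneg (hind01 _ _).1 (hindψ _).1
      have hp1 : (K \ O).indicator (1 : X → ℝ) (proc (stopIdx O K proc n ω) ω) *
          K.indicator ψ (proc (stopIdx O K proc (n + 1) ω) ω) ≤ 1 :=
        mul_le_one₀ (hind01 _ _).2 (hindψ _).1 (hindψ _).2
      show ‖(∑ t ∈ Finset.range (stopIdx O K proc n ω + 1),
          O.indicator (1 : X → ℝ) (proc t ω)) +
        (K \ O).indicator (1 : X → ℝ) (proc (stopIdx O K proc n ω) ω) *
          K.indicator ψ (proc (stopIdx O K proc (n + 1) ω) ω)‖ ≤ _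
      rw [Real.norm_eq_abs, abs_of_nonneg (add_nonneg hs0 hp0)]
      push_cast
      linarith
  have hint : ∀ n, Integrable (zeta O K proc x ψ n) P := fun n =>
    Integrable.mono' (integrable_const ((n : ℝ) + 2))
      (((hzadapt n).mono (ℱ.le n)).aestronglyMeasurable)
      (ae_of_all _ (hbound n))
  -- the auxiliary function g
  have hgmeas : ∀ n, Measurable (fun ω' => K.indicator ψ (proc (n + 1) ω')) :=
    fun n => (hψmeas.indicator hmK).comp ((hadapt (n + 1)).mono (ℱ.le (n + 1)) le_rfl)
  have hgint : ∀ n, Integrable (fun ω' => K.indicator ψ (proc (n + 1) ω')) P := by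
    intro n
    refine Integrable.mono' (integrable_const (1 : ℝ))
      (hgmeas n).aestronglyMeasurable (ae_of_all _ fun ω => ?_)
    rw [Real.norm_eq_abs, abs_of_nonneg (hindψ _).1]
    exact (hindψ _).2
  -- decomposition of zeta (n+1)
  have hdecomp : ∀ n, zeta O K proc x ψ (n + 1) =ᵐ[P] fun ω =>
      (A n).indicator (zeta O K proc x ψ n) ω
        + (A n)ᶜ.indicator (fun ω' => K.indicator ψ (proc (n + 1) ω')) ω := by
    intro n
    filter_upwards [hx0] with ω hx
    by_cases hω : stopMin O K proc ω ≤ (n : ℕ∞)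
    · rw [indicator_of_mem (show ω ∈ A n from hω),
        indicator_of_notMem (show ω ∉ (A n)ᶜ from not_not_intro hω), add_zero]
      exact stmt10_zeta_succ_of_le hOK' hψO hψK hx hω
    · rw [indicator_of_notMem (show ω ∉ A n from hω),
        indicator_of_mem (show ω ∈ (A n)ᶜ from hω), zero_add]
      exact stmt10_zeta_succ_of_lt (not_le.mp hω)
  have hzdecomp : ∀ n, zeta O K proc x ψ n =ᵐ[P] fun ω =>
      (A n).indicator (zeta O K proc x ψ n) ω
        + (A n)ᶜ.indicator (fun ω' => ψ (proc n ω')) ω := by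
    intro n
    filter_upwards [hx0] with ω hx
    by_cases hω : stopMin O K proc ω ≤ (n : ℕ∞)
    · rw [indicator_of_mem (show ω ∈ A n from hω),
        indicator_of_notMem (show ω ∉ (A n)ᶜ from not_not_intro hω), add_zero]
    · rw [indicator_of_notMem (show ω ∉ A n from hω),
        indicator_of_mem (show ω ∈ (A n)ᶜ from hω), zero_add]
      exact stmt10_zeta_eq_psi hOK' hψO hx (not_le.mp hω)
  -- conditional expectation computation
  have hcond : ∀ n, P[zeta O K proc x ψ (n + 1) | ℱ n] =ᵐ[P] fun ω =>
      (A n).indicator (zeta O K proc x ψ n) ω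
        + (A n)ᶜ.indicator (P[fun ω' => K.indicator ψ (proc (n + 1) ω') | ℱ n]) ω := by
    intro n
    have hint1 : Integrable ((A n).indicator (zeta O K proc x ψ n)) P :=
      (hint n).indicator (ℱ.le n _ (hAmeas n))
    have hint2 : Integrable ((A n)ᶜ.indicator (fun ω' => K.indicator ψ (proc (n + 1) ω'))) P :=
      (hgint n).indicator (ℱ.le n _ (hAmeas n).compl)
    calc P[zeta O K proc x ψ (n + 1) | ℱ n]
        =ᵐ[P] P[(A n).indicator (zeta O K proc x ψ n)
            + (A n)ᶜ.indicator (fun ω' => K.indicator ψ (proc (n + 1) ω')) | ℱ n] :=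
          condExp_congr_ae (hdecomp n)
      _ =ᵐ[P] P[(A n).indicator (zeta O K proc x ψ n) | ℱ n]
            + P[(A n)ᶜ.indicator (fun ω' => K.indicator ψ (proc (n + 1) ω')) | ℱ n] :=
          condExp_add hint1 hint2 _
      _ =ᵐ[P] fun ω => (A n).indicator (zeta O K proc x ψ n) ω
            + (A n)ᶜ.indicator (P[fun ω' => K.indicator ψ (proc (n + 1) ω') | ℱ n]) ω := by
          have h1 : P[(A n).indicator (zeta O K proc x ψ n) | ℱ n]
              = (A n).indicator (zeta O K proc x ψ n) :=
            condExp_of_stronglyMeasurable (ℱ.le n) ((hzadapt n).indicator (hAmeas n)) hint1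
          have h2 := condExp_indicator (m := ℱ n) (hgint n) (hAmeas n).compl
          rw [h1]
          filter_upwards [h2] with ω h2'
          simp only [Pi.add_apply]
          rw [h2']
  -- supermartingale inequality
  have hsuper : ∀ n, P[zeta O K proc x ψ (n + 1) | ℱ n] ≤ᵐ[P] zeta O K proc x ψ n := by
    intro n
    filter_upwards [hcons n, hcond n, hzdecomp n] with ω h1 h2 h3
    rw [h2, h3]
    by_cases hω : ω ∈ A n
    · rw [indicator_of_notMem (show ω ∉ (A n)ᶜ by simpa using hω),
        indicator_of_notMem (show ω ∉ (A n)ᶜ by simpa using hω)]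
    · have hσ : (n : ℕ∞) < stopMin O K proc ω := not_le.mp hω
      rw [indicator_of_mem (show ω ∈ (A n)ᶜ from hω),
        indicator_of_mem (show ω ∈ (A n)ᶜ from hω)]
      exact add_le_add_right (h1 hσ) _
  -- per-step equivalence
  have step_iff : ∀ n, (zeta O K proc x ψ n =ᵐ[P] P[zeta O K proc x ψ (n + 1) | ℱ n]) ↔
      (∀ᵐ ω ∂P, (n : ℕ∞) < stopMin O K proc ω →
        (P[fun ω' => K.indicator ψ (proc (n + 1) ω') | ℱ n]) ω = ψ (proc n ω)) := by
    intro n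
    constructor
    · intro h
      filter_upwards [h, hcond n, hzdecomp n] with ω h1 h2 h3 hσ
      have hω : ω ∈ (A n)ᶜ := not_le.mpr hσ
      have := h3.symm.trans (h1.trans h2)
      rw [indicator_of_mem hω, indicator_of_mem hω] at this
      exact (add_left_cancel this).symm
    · intro h
      filter_upwards [h, hcond n, hzdecomp n] with ω h1 h2 h3
      rw [h2, h3]
      by_cases hω : ω ∈ A n
      · rw [indicator_of_notMem (show ω ∉ (A n)ᶜ by simpa using hω),
          indicator_of_notMem (show ω ∉ (A n)ᶜ by simpa using hω)]
      · have hσ : (n : ℕ∞) < stopMin O K proc ω := not_le.mp hω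
        rw [indicator_of_mem (show ω ∈ (A n)ᶜ from hω),
          indicator_of_mem (show ω ∈ (A n)ᶜ from hω), h1 hσ]
  -- expectation of zeta 0
  have hE0 : ∫ ω, zeta O K proc x ψ 0 ω ∂P = ψ x := by
    show ∫ _ω, ψ x ∂P = ψ x
    simp [integral_const]
  have hmart_of : (∀ n : ℕ, ∀ᵐ ω ∂P, (n : ℕ∞) < stopMin O K proc ω →
      (P[fun ω' => K.indicator ψ (proc (n + 1) ω') | ℱ n]) ω = ψ (proc n ω)) →
      Martingale (zeta O K proc x ψ) ℱ P := fun h =>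
    martingale_nat hzadapt hint fun n => (step_iff n).mpr (h n)
  have hmart_to : Martingale (zeta O K proc x ψ) ℱ P →
      ∀ n : ℕ, ∀ᵐ ω ∂P, (n : ℕ∞) < stopMin O K proc ω →
      (P[fun ω' => K.indicator ψ (proc (n + 1) ω') | ℱ n]) ω = ψ (proc n ω) := fun hm n =>
    (step_iff n).mp ((hm.condExp_ae_eq (Nat.le_succ n)).symm)
  constructor
  · constructor
    · -- tendsto → martingale
      intro ht
      have hanti : ∀ n, (∫ ω, zeta O K proc x ψ (n + 1) ω ∂P) ≤ ∫ ω, zeta O K proc x ψ n ω ∂P := by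
        intro n
        calc (∫ ω, zeta O K proc x ψ (n + 1) ω ∂P)
            = ∫ ω, (P[zeta O K proc x ψ (n + 1) | ℱ n]) ω ∂P :=
              (integral_condExp (ℱ.le n)).symm
          _ ≤ ∫ ω, zeta O K proc x ψ n ω ∂P :=
              integral_mono_ae integrable_condExp (hint n) (hsuper n)
      have hmono : Antitone (fun n => ∫ ω, zeta O K proc x ψ n ω ∂P) :=
        antitone_nat_of_succ_le hanti
      have heq : ∀ n, (∫ ω, zeta O K proc x ψ n ω ∂P) = ψ x := fun n =>
        le_antisymm (le_trans (hmono (Nat.zero_le n)) hE0.le) (hmono.le_of_tendsto ht n)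
      refine martingale_nat hzadapt hint fun n => ?_
      have hnonneg : 0 ≤ᵐ[P]
          (zeta O K proc x ψ n - P[zeta O K proc x ψ (n + 1) | ℱ n]) := by
        filter_upwards [hsuper n] with ω hω
        simp only [Pi.sub_apply, Pi.zero_apply, sub_nonneg]
        exact hω
      have hintsub : Integrable
          (zeta O K proc x ψ n - P[zeta O K proc x ψ (n + 1) | ℱ n]) P :=
        (hint n).sub integrable_condExp
      have hzero : ∫ ω, (zeta O K proc x ψ n - P[zeta O K proc x ψ (n + 1) | ℱ n]) ω ∂P = 0 := by
        simp only [Pi.sub_apply]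
        rw [integral_sub (hint n) integrable_condExp,
          integral_condExp (ℱ.le n), heq n, heq (n + 1)]
        ring
      have hae := (integral_eq_zero_iff_of_nonneg_ae hnonneg hintsub).mp hzero
      filter_upwards [hae] with ω hω
      have : zeta O K proc x ψ n ω - (P[zeta O K proc x ψ (n + 1) | ℱ n]) ω = 0 := hω
      linarith
    · -- martingale → tendsto
      intro hm
      have heq : ∀ n, (∫ ω, zeta O K proc x ψ n ω ∂P) = ψ x := by
        intro n
        calc (∫ ω, zeta O K proc x ψ n ω ∂P)
            = ∫ ω, (P[zeta O K proc x ψ n | ℱ 0]) ω ∂P :=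
              (integral_condExp (ℱ.le 0)).symm
          _ = ∫ ω, zeta O K proc x ψ 0 ω ∂P :=
              integral_congr_ae (hm.condExp_ae_eq (Nat.zero_le n))
          _ = ψ x := hE0
      rw [show (fun n => ∫ ω, zeta O K proc x ψ n ω ∂P) = fun _ => ψ x from funext heq]
      exact tendsto_const_nhds
  · exact ⟨hmart_to, hmart_of⟩
end
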